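/- Let f : ℝ → ℝ be continuous with f(t) → +∞ as t → +∞ and f(t) → -∞ as t → -∞, and set F(t) = sup_{s ≤ t} f(s). Then for every t ∈ ℝ, inf_{s ≥ t} (2F(s) - f(s)) = F(t). -/

import Mathlib

open Filter Set

/-- Lemma D.3 (Pitman-type identity): for continuous `f` with `f(t) → ±∞` as `t → ±∞`
and `F(t) = sup_{s ≤ t} f(s)`, one has `inf_{s ≥ t} (2F(s) - f(s)) = F(t)`. -/
theorem pitman_identity (f : ℝ → ℝ) (hf : Continuous f)
    (htop : Tendsto f atTop atTop) (hbot : Tendsto f atBot atBot)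
    (F : ℝ → ℝ) (hF : ∀ t, F t = sSup (f '' Iic t)) :
    ∀ t : ℝ, sInf ((fun s => 2 * F s - f s) '' Ici t) = F t := by
  -- boundedness above of the images
  have hbdd : ∀ t : ℝ, BddAbove (f '' Iic t) := by
    intro t
    obtain ⟨B, hB⟩ := eventually_atBot.mp (hbot.eventually (eventually_le_atBot (0:ℝ)))
    obtain ⟨C, hC⟩ := (isCompact_Icc : IsCompact (Icc B t)).bddAbove_image hf.continuousOn
    refine ⟨max 0 C, ?_⟩
    rintro y ⟨s, hs, rfl⟩
    rcases le_or_gt s B with h | h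
    · exact le_trans (hB s h) (le_max_left _ _)
    · exact le_trans (hC ⟨s, ⟨h.le, hs⟩, rfl⟩) (le_max_right _ _)
  have hne : ∀ t : ℝ, (f '' Iic t).Nonempty := fun t => ⟨f t, t, mem_Iic.2 le_rfl, rfl⟩
  have hfF : ∀ t : ℝ, f t ≤ F t := fun t => (hF t) ▸ le_csSup (hbdd t) ⟨t, mem_Iic.2 le_rfl, rfl⟩
  have hfF' : ∀ s t : ℝ, s ≤ t → f s ≤ F t := fun s t h =>
    (hF t) ▸ le_csSup (hbdd t) ⟨s, mem_Iic.2 h, rfl⟩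
  have hmono : ∀ s t : ℝ, s ≤ t → F s ≤ F t := by
    intro s t h
    rw [hF s, hF t]
    exact csSup_le_csSup (hbdd t) (hne s) (image_mono (f := f) (Iic_subset_Iic.2 h))
  intro t
  -- lower bound
  have hlb : ∀ x ∈ (fun s => 2 * F s - f s) '' Ici t, F t ≤ x := by
    rintro x ⟨s, hs, rfl⟩
    have h1 := hmono t s hs
    have h2 := hfF s
    simp only
    linarith
  -- construct s₀
  set S : Set ℝ := Ici t ∩ {s | F t ≤ f s} with hS
  have hSne : S.Nonempty := by
    have h1 : ∀ᶠ s in atTop, F t ≤ f s := htop.eventually (eventually_ge_atTop (F t))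
    have h2 : ∀ᶠ s in atTop, t ≤ s := eventually_ge_atTop t
    exact (h2.and h1).exists
  have hSclosed : IsClosed S := isClosed_Ici.inter (isClosed_le continuous_const hf)
  have hSbdd : BddBelow S := ⟨t, fun s hs => hs.1⟩
  set s₀ := sInf S with hs₀def
  have hs₀mem : s₀ ∈ S := hSclosed.csInf_mem hSne hSbdd
  have hts₀ : t ≤ s₀ := hs₀mem.1
  have hFf : F t ≤ f s₀ := hs₀mem.2
  have hlt : ∀ s, t ≤ s → s < s₀ → f s < F t := by
    intro s hts hss
    by_contra h
    push_neg at h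
    exact absurd (csInf_le hSbdd ⟨mem_Ici.2 hts, h⟩) (not_le.2 hss)
  have hfeq : f s₀ = F t := by
    refine le_antisymm ?_ hFf
    rcases eq_or_lt_of_le hts₀ with h | h
    · exact h ▸ hfF t
    · have tend : Tendsto f (nhdsWithin s₀ (Iio s₀)) (nhds (f s₀)) :=
        (hf.tendsto s₀).mono_left nhdsWithin_le_nhds
      have hev : ∀ᶠ s in nhdsWithin s₀ (Iio s₀), f s ≤ F t := by
        have h1 : ∀ᶠ s in nhdsWithin s₀ (Iio s₀), s ∈ Ioi t :=
          eventually_nhdsWithin_of_eventually_nhds (Ioi_mem_nhds h)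
        have h2 : ∀ᶠ s in nhdsWithin s₀ (Iio s₀), s ∈ Iio s₀ := self_mem_nhdsWithin
        filter_upwards [h1, h2] with s hs1 hs2
        exact (hlt s hs1.le hs2).le
      exact le_of_tendsto tend hev
  have hFeq : F s₀ = F t := by
    refine le_antisymm ?_ (hmono t s₀ hts₀)
    rw [hF s₀]
    refine csSup_le (hne s₀) ?_
    rintro y ⟨s, hs, rfl⟩
    rcases le_or_gt s t with h | h
    · exact hfF' s t h
    · rcases eq_or_lt_of_le (mem_Iic.mp hs) with h' | h'
      · exact h' ▸ hfeq.le
      · exact (hlt s h.le h').le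
  refine le_antisymm ?_ (le_csInf ⟨_, ⟨t, mem_Ici.2 le_rfl, rfl⟩⟩ hlb)
  have : (fun s => 2 * F s - f s) s₀ = F t := by
    simp only [hFeq, hfeq]; ring
  calc sInf ((fun s => 2 * F s - f s) '' Ici t) ≤ (fun s => 2 * F s - f s) s₀ :=
      csInf_le ⟨F t, hlb⟩ ⟨s₀, mem_Ici.2 hts₀, rfl⟩
    _ = F t := this
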